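/- For every permutation σ of {1,2} and every integer n ≥ 1, F_σ(n) ∩ F(1) = F_σ(1). -/

import Mathlib

open Submodule

/-- The increasing sequence of subspaces `F(n)`:
`F(0) = ⊥`, `F(n+1) = Σ_{i,j} (F(n) + Vᵢ) ⊓ (F(n) + Wⱼ)`. -/
noncomputable def Fseq {K E : Type*} [Field K] [AddCommGroup E] [Module K E]
    (V W : Fin 2 → Submodule K E) : ℕ → Submodule K E
  | 0 => ⊥
  | n + 1 => ⨆ i : Fin 2, ⨆ j : Fin 2, (Fseq V W n ⊔ V i) ⊓ (Fseq V W n ⊔ W j)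

/-- For a permutation `σ` of `{1,2}`, the increasing sequence of subspaces `F_σ(n)`:
`F_σ(0) = ⊥`, `F_σ(n+1) = Σ_i (F_σ(n) + Vᵢ) ⊓ (F_σ(n) + W_{σ(i)})`. -/
noncomputable def Fsig {K E : Type*} [Field K] [AddCommGroup E] [Module K E]
    (V W : Fin 2 → Submodule K E) (σ : Equiv.Perm (Fin 2)) : ℕ → Submodule K E
  | 0 => ⊥
  | n + 1 => ⨆ i : Fin 2, (Fsig V W σ n ⊔ V i) ⊓ (Fsig V W σ n ⊔ W (σ i))

section Aux

variable {K E : Type*} [Field K] [AddCommGroup E] [Module K E]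

private lemma fin2_cases : ∀ i j : Fin 2, i = j ∨ i = j + 1 := by decide

private lemma fin2_add : ∀ i : Fin 2, i + 1 + 1 = i := by decide

private lemma perm2 (σ : Equiv.Perm (Fin 2)) (i : Fin 2) : σ (i + 1) = σ i + 1 := by
  have h : σ (i + 1) ≠ σ i := by
    intro h
    have h2 := σ.injective h
    have : (i : Fin 2) + 1 ≠ i := by fin_cases i <;> decide
    exact this h2
  have key : ∀ a b : Fin 2, a ≠ b → a = b + 1 := by decide
  exact key _ _ h

variable (V W : Fin 2 → Submodule K E) (σ : Equiv.Perm (Fin 2))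

lemma Fsig_succ (n : ℕ) :
    Fsig V W σ (n + 1) =
      ⨆ i : Fin 2, (Fsig V W σ n ⊔ V i) ⊓ (Fsig V W σ n ⊔ W (σ i)) := rfl

lemma Fsig_mono : ∀ n, Fsig V W σ n ≤ Fsig V W σ (n + 1) := by
  intro n
  induction n with
  | zero => exact bot_le
  | succ n ih =>
    rw [Fsig_succ, Fsig_succ]
    exact iSup_mono fun i => inf_le_inf (sup_le_sup_right ih _) (sup_le_sup_right ih _)

lemma Fsig_le_summand (n : ℕ) (i : Fin 2) :
    (Fsig V W σ n ⊔ V i) ⊓ (Fsig V W σ n ⊔ W (σ i)) ≤ Fsig V W σ (n + 1) := by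
  rw [Fsig_succ]
  exact le_iSup (fun i => (Fsig V W σ n ⊔ V i) ⊓ (Fsig V W σ n ⊔ W (σ i))) i

/-- `F_σ(n)` is invariant under any linear map acting as `id` or `0` on each member of one
of the two families. -/
lemma Fsig_inv (R : E →ₗ[K] E)
    (hR : (∀ i (v : E), v ∈ V i → R v = v ∨ R v = 0) ∨
          (∀ j (w : E), w ∈ W j → R w = w ∨ R w = 0)) :
    ∀ n, ∀ x ∈ Fsig V W σ n, R x ∈ Fsig V W σ n := by
  intro n
  induction n with
  | zero =>
    intro x hx
    simp only [Fsig, mem_bot] at hx ⊢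
    simp [hx]
  | succ n ih =>
    intro x hx
    rw [Fsig_succ] at hx
    refine Submodule.iSup_induction (motive := fun y => R y ∈ Fsig V W σ (n + 1)) _ hx ?_ (by simp)
      (fun a b ha hb => by simp only [map_add]; exact add_mem ha hb)
    intro i y hy
    have hyF : y ∈ Fsig V W σ (n + 1) := Fsig_le_summand V W σ n i hy
    obtain ⟨hy1, hy2⟩ := hy
    rcases hR with hRV | hRW
    · obtain ⟨f, hf, v, hv, hfv⟩ := Submodule.mem_sup.mp hy1
      have hRf : R f ∈ Fsig V W σ (n + 1) := Fsig_mono V W σ n (ih f hf)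
      have hfF : f ∈ Fsig V W σ (n + 1) := Fsig_mono V W σ n hf
      rcases hRV i v hv with h | h
      · have : R y = R f + v := by rw [← hfv, map_add, h]
        rw [this]
        have hvmem : v ∈ Fsig V W σ (n + 1) := by
          have : v = y - f := by rw [← hfv]; abel
          rw [this]; exact sub_mem hyF hfF
        exact add_mem hRf hvmem
      · have : R y = R f := by rw [← hfv, map_add, h, add_zero]
        rw [this]; exact hRf
    · obtain ⟨g, hg, w, hw, hgw⟩ := Submodule.mem_sup.mp hy2
      have hRg : R g ∈ Fsig V W σ (n + 1) := Fsig_mono V W σ n (ih g hg)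
      have hgF : g ∈ Fsig V W σ (n + 1) := Fsig_mono V W σ n hg
      rcases hRW (σ i) w hw with h | h
      · have : R y = R g + w := by rw [← hgw, map_add, h]
        rw [this]
        have hwmem : w ∈ Fsig V W σ (n + 1) := by
          have : w = y - g := by rw [← hgw]; abel
          rw [this]; exact sub_mem hyF hgF
        exact add_mem hRg hwmem
      · have : R y = R g := by rw [← hgw, map_add, h, add_zero]
        rw [this]; exact hRg

variable (P Q : Fin 2 → E →ₗ[K] E)
variable (hPid : ∀ i, ∀ v ∈ V i, P i v = v) (hPzero : ∀ i, ∀ v ∈ V (i + 1), P i v = 0)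
variable (hPsum : ∀ i (x : E), P i x + P (i + 1) x = x)
variable (hQid : ∀ j, ∀ w ∈ W j, Q j w = w) (hQzero : ∀ j, ∀ w ∈ W (j + 1), Q j w = 0)

include hPid hPzero hPsum hQid hQzero in
lemma Fsig_step (n : ℕ) :
    ∀ x ∈ Fsig V W σ (n + 1),
      x - P 0 (Q (σ 0) x) - P 1 (Q (σ 1) x) ∈ Fsig V W σ n := by
  have hPstab : ∀ j (x : E), x ∈ Fsig V W σ n → P j x ∈ Fsig V W σ n := by
    intro j x hx
    refine Fsig_inv V W σ (P j) (Or.inl fun i v hv => ?_) n x hx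
    rcases fin2_cases i j with h | h
    · subst h; exact Or.inl (hPid _ v hv)
    · subst h; exact Or.inr (hPzero _ v hv)
  have hQstab : ∀ j (x : E), x ∈ Fsig V W σ n → Q j x ∈ Fsig V W σ n := by
    intro j x hx
    refine Fsig_inv V W σ (Q j) (Or.inr fun i w hw => ?_) n x hx
    rcases fin2_cases i j with h | h
    · subst h; exact Or.inl (hQid _ w hw)
    · subst h; exact Or.inr (hQzero _ w hw)
  intro x hx
  rw [Fsig_succ] at hx
  refine Submodule.iSup_induction
      (motive := fun y => y - P 0 (Q (σ 0) y) - P 1 (Q (σ 1) y) ∈ Fsig V W σ n) _ hx ?_ (by simp) ?_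
  · intro i y hy
    obtain ⟨hy1, hy2⟩ := hy
    obtain ⟨f, hf, v, hv, hfv⟩ := Submodule.mem_sup.mp hy1
    obtain ⟨g, hg, w, hw, hgw⟩ := Submodule.mem_sup.mp hy2
    have hσ1 : σ (i + 1) = σ i + 1 := perm2 σ i
    have key : y - P i (Q (σ i) y) - P (i + 1) (Q (σ (i + 1)) y) ∈ Fsig V W σ n := by
      have e1 : Q (σ i) y = Q (σ i) g + w := by
        rw [← hgw, map_add, hQid _ w hw]
      have e2 : Q (σ (i + 1)) y = Q (σ (i + 1)) g := by
        rw [← hgw, map_add, hQzero _ w (by rw [hσ1, fin2_add]; exact hw), add_zero]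
      have e3 : P (i + 1) y = P (i + 1) f := by
        rw [← hfv, map_add, hPzero _ v (by rw [fin2_add]; exact hv), add_zero]
      have e5 : P (i + 1) w = P (i + 1) f - P (i + 1) g := by
        have hwyg : w = y - g := by rw [← hgw]; abel
        rw [hwyg, map_sub, e3]
      have e4 : P i w = w - (P (i + 1) f - P (i + 1) g) := by
        rw [← e5]
        exact eq_sub_of_add_eq (hPsum i w)
      rw [e1, e2, map_add, e4, ← hgw]
      have eq : g + w - (P i (Q (σ i) g) + (w - (P (i + 1) f - P (i + 1) g)))
            - P (i + 1) (Q (σ (i + 1)) g) =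
          g - P (i + 1) g + P (i + 1) f - P i (Q (σ i) g) - P (i + 1) (Q (σ (i + 1)) g) := by
        abel
      rw [eq]
      exact sub_mem (sub_mem (add_mem (sub_mem hg (hPstab _ _ hg)) (hPstab _ _ hf))
        (hPstab _ _ (hQstab _ _ hg))) (hPstab _ _ (hQstab _ _ hg))
    rcases fin2_cases i 0 with h | h
    · rw [h] at key
      rwa [show ((0 : Fin 2) + 1) = 1 from rfl] at key
    · rw [show ((0 : Fin 2) + 1) = 1 from rfl] at h
      rw [h] at key
      rw [show ((1 : Fin 2) + 1) = 0 from rfl] at key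
      rwa [sub_right_comm] at key
  · intro a b ha hb
    have : a + b - P 0 (Q (σ 0) (a + b)) - P 1 (Q (σ 1) (a + b)) =
        (a - P 0 (Q (σ 0) a) - P 1 (Q (σ 1) a)) + (b - P 0 (Q (σ 0) b) - P 1 (Q (σ 1) b)) := by
      simp only [map_add]; abel
    rw [this]
    exact add_mem ha hb

include hPid hPzero hPsum hQid hQzero in
lemma Fsig_inf_bot :
    ∀ n, ∀ x ∈ Fsig V W σ n, x ∈ (V 0 ⊓ W (σ 1)) ⊔ (V 1 ⊓ W (σ 0)) → x = 0 := by
  intro n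
  induction n with
  | zero =>
    intro x hx _
    simpa only [Fsig, mem_bot] using hx
  | succ n ih =>
    intro x hx hX
    have hstep := Fsig_step V W σ P Q hPid hPzero hPsum hQid hQzero n x hx
    have hSx : x - P 0 (Q (σ 0) x) - P 1 (Q (σ 1) x) = x := by
      obtain ⟨a, ha, b, hb, hab⟩ := Submodule.mem_sup.mp hX
      obtain ⟨haV, haW⟩ := ha
      obtain ⟨hbV, hbW⟩ := hb
      have hσ : σ 1 = σ 0 + 1 := by
        have := perm2 σ 0
        rwa [show ((0 : Fin 2) + 1) = 1 from rfl] at this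
      have c1 : Q (σ 0) x = b := by
        rw [← hab, map_add, hQzero _ a (by rw [← hσ]; exact haW), hQid _ b hbW, zero_add]
      have c2 : Q (σ 1) x = a := by
        rw [← hab, map_add, hQid _ a haW,
          hQzero _ b (by rw [hσ, fin2_add]; exact hbW), add_zero]
      have c3 : P 0 b = 0 := hPzero 0 b hbV
      have c4 : P 1 a = 0 := hPzero 1 a (by rw [show ((1 : Fin 2) + 1) = 0 from rfl]; exact haV)
      rw [c1, c2, c3, c4, sub_zero, sub_zero]
    rw [hSx] at hstep
    exact ih x hstep hX

private lemma iSup_fin2 (f : Fin 2 → Submodule K E) : (⨆ i, f i) = f 0 ⊔ f 1 :=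
  le_antisymm (iSup_le fun i => by
    rcases fin2_cases i 0 with h | h
    · rw [h]; exact le_sup_left
    · rw [show ((0 : Fin 2) + 1) = 1 from rfl] at h; rw [h]; exact le_sup_right)
    (sup_le (le_iSup f 0) (le_iSup f 1))

lemma Fseq_one_eq :
    Fseq V W 1 = Fsig V W σ 1 ⊔ ((V 0 ⊓ W (σ 1)) ⊔ (V 1 ⊓ W (σ 0))) := by
  have h1 : Fseq V W 1 = (V 0 ⊓ W 0 ⊔ V 0 ⊓ W 1) ⊔ (V 1 ⊓ W 0 ⊔ V 1 ⊓ W 1) := by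
    show (⨆ i : Fin 2, ⨆ j : Fin 2, ((⊥ : Submodule K E) ⊔ V i) ⊓ (⊥ ⊔ W j)) = _
    simp only [bot_sup_eq]
    rw [iSup_fin2 fun i => ⨆ j : Fin 2, V i ⊓ W j, iSup_fin2 fun j => V 0 ⊓ W j,
      iSup_fin2 fun j => V 1 ⊓ W j]
  have h2 : Fsig V W σ 1 = (V 0 ⊓ W (σ 0)) ⊔ (V 1 ⊓ W (σ 1)) := by
    show (⨆ i : Fin 2, ((⊥ : Submodule K E) ⊔ V i) ⊓ (⊥ ⊔ W (σ i))) = _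
    simp only [bot_sup_eq]
    rw [iSup_fin2 fun i => V i ⊓ W (σ i)]
  have hσ : σ 1 = σ 0 + 1 := by
    have := perm2 σ 0
    rwa [show ((0 : Fin 2) + 1) = 1 from rfl] at this
  rw [h1, h2]
  rcases fin2_cases (σ 0) 0 with h | h
  · rw [h] at hσ
    rw [h, hσ, show ((0 : Fin 2) + 1) = 1 from rfl]
    ac_rfl
  · rw [show ((0 : Fin 2) + 1) = 1 from rfl] at h
    rw [h] at hσ
    rw [h, hσ, show ((1 : Fin 2) + 1) = 0 from rfl]
    ac_rfl

end Aux

/-- For every permutation `σ` of `{1,2}` and every `n ≥ 1`, `F_σ(n) ∩ F(1) = F_σ(1)`. -/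
theorem stmt8 {K E : Type*} [Field K] [AddCommGroup E] [Module K E]
    [FiniteDimensional K E] (hchar : (2 : K) ≠ 0)
    (V W : Fin 2 → Submodule K E)
    (hV : IsCompl (V 0) (V 1)) (hW : IsCompl (W 0) (W 1)) :
    ∀ (σ : Equiv.Perm (Fin 2)) (n : ℕ), 1 ≤ n →
      Fsig V W σ n ⊓ Fseq V W 1 = Fsig V W σ 1 := by
  intro σ n hn
  set P : Fin 2 → E →ₗ[K] E :=
    ![(V 0).subtype ∘ₗ (V 0).linearProjOfIsCompl (V 1) hV,
      (V 1).subtype ∘ₗ (V 1).linearProjOfIsCompl (V 0) hV.symm] with hPdef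
  set Q : Fin 2 → E →ₗ[K] E :=
    ![(W 0).subtype ∘ₗ (W 0).linearProjOfIsCompl (W 1) hW,
      (W 1).subtype ∘ₗ (W 1).linearProjOfIsCompl (W 0) hW.symm] with hQdef
  have hP0 : ∀ x : E, P 0 x = ((V 0).linearProjOfIsCompl (V 1) hV x : E) := fun x => by
    simp [hPdef]
  have hP1 : ∀ x : E, P 1 x = ((V 1).linearProjOfIsCompl (V 0) hV.symm x : E) := fun x => by
    simp [hPdef]
  have hQ0 : ∀ x : E, Q 0 x = ((W 0).linearProjOfIsCompl (W 1) hW x : E) := fun x => by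
    simp [hQdef]
  have hQ1 : ∀ x : E, Q 1 x = ((W 1).linearProjOfIsCompl (W 0) hW.symm x : E) := fun x => by
    simp [hQdef]
  have h01 : ((0 : Fin 2) + 1) = 1 := rfl
  have h10 : ((1 : Fin 2) + 1) = 0 := rfl
  have hPid : ∀ i, ∀ v ∈ V i, P i v = v := by
    intro i v hv
    rcases fin2_cases i 0 with h | h
    · subst h
      rw [hP0]
      exact congrArg Subtype.val (Submodule.linearProjOfIsCompl_apply_left hV ⟨v, hv⟩)
    · rw [h01] at h; subst h
      rw [hP1]
      exact congrArg Subtype.val (Submodule.linearProjOfIsCompl_apply_left hV.symm ⟨v, hv⟩)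
  have hPzero : ∀ i, ∀ v ∈ V (i + 1), P i v = 0 := by
    intro i v hv
    rcases fin2_cases i 0 with h | h
    · subst h
      rw [h01] at hv
      rw [hP0]
      have := congrArg Subtype.val (Submodule.linearProjOfIsCompl_apply_right hV ⟨v, hv⟩)
      exact this
    · rw [h01] at h; subst h
      rw [h10] at hv
      rw [hP1]
      have := congrArg Subtype.val (Submodule.linearProjOfIsCompl_apply_right hV.symm ⟨v, hv⟩)
      exact this
  have hPsum : ∀ i (x : E), P i x + P (i + 1) x = x := by
    intro i x
    rcases fin2_cases i 0 with h | h
    · subst h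
      rw [h01, hP0, hP1]
      exact Submodule.projection_add_projection_eq_self hV x
    · rw [h01] at h; subst h
      rw [h10, hP0, hP1, add_comm]
      exact Submodule.projection_add_projection_eq_self hV x
  have hQid : ∀ j, ∀ w ∈ W j, Q j w = w := by
    intro j w hw
    rcases fin2_cases j 0 with h | h
    · subst h
      rw [hQ0]
      exact congrArg Subtype.val (Submodule.linearProjOfIsCompl_apply_left hW ⟨w, hw⟩)
    · rw [h01] at h; subst h
      rw [hQ1]
      exact congrArg Subtype.val (Submodule.linearProjOfIsCompl_apply_left hW.symm ⟨w, hw⟩)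
  have hQzero : ∀ j, ∀ w ∈ W (j + 1), Q j w = 0 := by
    intro j w hw
    rcases fin2_cases j 0 with h | h
    · subst h
      rw [h01] at hw
      rw [hQ0]
      have := congrArg Subtype.val (Submodule.linearProjOfIsCompl_apply_right hW ⟨w, hw⟩)
      exact this
    · rw [h01] at h; subst h
      rw [h10] at hw
      rw [hQ1]
      have := congrArg Subtype.val (Submodule.linearProjOfIsCompl_apply_right hW.symm ⟨w, hw⟩)
      exact this
  have hbot : Fsig V W σ n ⊓ ((V 0 ⊓ W (σ 1)) ⊔ (V 1 ⊓ W (σ 0))) = ⊥ := by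
    rw [eq_bot_iff]
    rintro x ⟨h1, h2⟩
    rw [mem_bot]
    exact Fsig_inf_bot V W σ P Q hPid hPzero hPsum hQid hQzero n x h1 h2
  have hmono : Fsig V W σ 1 ≤ Fsig V W σ n :=
    monotone_nat_of_le_succ (Fsig_mono V W σ) hn
  calc Fsig V W σ n ⊓ Fseq V W 1
      = (Fsig V W σ 1 ⊔ ((V 0 ⊓ W (σ 1)) ⊔ (V 1 ⊓ W (σ 0)))) ⊓ Fsig V W σ n := by
        rw [Fseq_one_eq V W σ, inf_comm]
    _ = Fsig V W σ 1 ⊔ (((V 0 ⊓ W (σ 1)) ⊔ (V 1 ⊓ W (σ 0))) ⊓ Fsig V W σ n) :=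
        sup_inf_assoc_of_le _ hmono
    _ = Fsig V W σ 1 := by
        rw [inf_comm ((V 0 ⊓ W (σ 1)) ⊔ (V 1 ⊓ W (σ 0))) (Fsig V W σ n), hbot, sup_bot_eq]
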